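/- There exist n S-disjoint edges in the colored union graph of a structured switched linear system if and only if the concatenated structured pattern [A_1, A_2, …, A_m, B_1, B_2, …, B_m] has generic rank n. -/

import Mathlib

/-- Edge relation of the graph `G_i` of subsystem `i`, on vertices `Fin r ⊕ Fin n`
(inputs on the left, states on the right). -/
def subEdge {m n r : ℕ}
    (PA : Fin m → Fin n → Fin n → Prop) (PB : Fin m → Fin n → Fin r → Prop)
    (i : Fin m) (v w : Fin r ⊕ Fin n) : Prop :=
  match v, w with
  | Sum.inl j, Sum.inr k => PB i k j
  | Sum.inr l, Sum.inr k => PA i k l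
  | _, _ => False

/-- Edge relation of the union graph `G`. -/
def unionEdge {m n r : ℕ}
    (PA : Fin m → Fin n → Fin n → Prop) (PB : Fin m → Fin n → Fin r → Prop)
    (v w : Fin r ⊕ Fin n) : Prop :=
  ∃ i, subEdge PA PB i v w

/-- A state vertex is accessible if some directed path in the union graph starting at an
input vertex reaches it. -/
def Accessible {m n r : ℕ}
    (PA : Fin m → Fin n → Fin n → Prop) (PB : Fin m → Fin n → Fin r → Prop)
    (k : Fin n) : Prop :=
  ∃ j : Fin r, Relation.ReflTransGen (unionEdge PA PB) (Sum.inl j) (Sum.inr k)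

/-- There exist `k` `S`-disjoint (colored) edges in the colored union graph: edges
`e_t = (v t, v' t)` of the subsystem graphs `G_{c t}` with pairwise distinct end vertices,
such that any two distinct edges with the same begin vertex carry distinct subsystem
indices. -/
def HasSDisjointEdges {m n r : ℕ}
    (PA : Fin m → Fin n → Fin n → Prop) (PB : Fin m → Fin n → Fin r → Prop)
    (k : ℕ) : Prop :=
  ∃ (v : Fin k → Fin r ⊕ Fin n) (v' : Fin k → Fin n) (c : Fin k → Fin m),
    (∀ t, subEdge PA PB (c t) (v t) (Sum.inr (v' t))) ∧
    Function.Injective v' ∧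
    (∀ s t, s ≠ t → v s = v t → c s ≠ c t)

/-- The concatenated structured pattern `[A_1,…,A_m,B_1,…,B_m]`: an `n × m(n+r)` pattern
whose columns are all the columns of the `A_i` followed by all the columns of the `B_i`,
columns from different subsystems counted as distinct. -/
def concatPattern {m n r : ℕ}
    (PA : Fin m → Fin n → Fin n → Prop) (PB : Fin m → Fin n → Fin r → Prop)
    (k : Fin n) : (Fin m × Fin n) ⊕ (Fin m × Fin r) → Prop :=
  fun c => match c with
  | Sum.inl (i, l) => PA i k l
  | Sum.inr (i, j) => PB i k j

/-- The generic rank of a structured pattern: the maximal rank achieved by a realization,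
i.e. by a real matrix vanishing at every fixed-zero position. -/
noncomputable def gRank {n : ℕ} {α : Type} [Fintype α] (P : Fin n → α → Prop) : ℕ :=
  sSup {t : ℕ | ∃ M : Matrix (Fin n) α ℝ, (∀ k c, ¬ P k c → M k c = 0) ∧ M.rank = t}

open Matrix Module Submodule

/-- A matrix over a field with full row rank contains an "injective transversal" of
nonzero entries: an injection of rows into columns hitting nonzero positions. -/
lemma exists_transversal_of_rank {n : ℕ} {α : Type} [Fintype α]
    (M : Matrix (Fin n) α ℝ) (hM : M.rank = n) :
    ∃ φ : Fin n → α, Function.Injective φ ∧ ∀ k, M k (φ k) ≠ 0 := by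
  classical
  -- the span of the columns has finrank n
  have hspan : finrank ℝ (span ℝ (Set.range Mᵀ)) = n := by
    rw [show Set.range Mᵀ = Set.range M.col from rfl, ← Matrix.rank_eq_finrank_span_cols, hM]
  obtain ⟨b, hbsub, hbspan, hbli⟩ := exists_linearIndependent ℝ (Set.range Mᵀ)
  have hbfin : b.Finite := hbli.setFinite
  haveI : Fintype b := hbfin.fintype
  have hcard : b.toFinset.card = n := by
    have := finrank_span_set_eq_card hbli
    rw [hbspan, hspan] at this
    omega
  -- choose an index for each column in b
  have hchoose : ∀ x : b, ∃ c : α, Mᵀ c = (x : Fin n → ℝ) := fun x => hbsub x.2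
  choose idx hidx using hchoose
  have hidxinj : Function.Injective idx := by
    intro x y hxy
    have : (x : Fin n → ℝ) = (y : Fin n → ℝ) := by rw [← hidx x, ← hidx y, hxy]
    exact Subtype.ext this
  -- an equiv Fin n ≃ b
  have hcard' : Fintype.card b = n := by rwa [Set.toFinset_card] at hcard
  let e : Fin n ≃ b := (Fintype.equivFinOfCardEq hcard').symm
  set g : Fin n → α := fun t => idx (e t) with hg
  have hginj : Function.Injective g := hidxinj.comp e.injective
  -- the square submatrix with columns g is invertible
  let M' : Matrix (Fin n) (Fin n) ℝ := fun k t => M k (g t)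
  have hcols : LinearIndependent ℝ (fun t => M'ᵀ t) := by
    have : (fun t => M'ᵀ t) = (fun x : b => (x : Fin n → ℝ)) ∘ e := by
      funext t
      have := hidx (e t)
      ext k
      exact congrFun this k
    rw [this]
    exact hbli.comp e e.injective
  have hdet : M'.det ≠ 0 := by
    have := Matrix.linearIndependent_cols_iff_isUnit.mp hcols
    rw [Matrix.isUnit_iff_isUnit_det] at this
    exact this.ne_zero
  -- Leibniz expansion: some permutation term is nonzero
  rw [Matrix.det_apply] at hdet
  obtain ⟨σ, hσ⟩ : ∃ σ : Equiv.Perm (Fin n), Equiv.Perm.sign σ • ∏ i, M' (σ i) i ≠ 0 := by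
    by_contra h
    push_neg at h
    exact hdet (Finset.sum_eq_zero fun σ _ => h σ)
  have hprod : ∏ i, M' (σ i) i ≠ 0 := fun h => hσ (by rw [h, smul_zero])
  refine ⟨fun k => g (σ.symm k), hginj.comp σ.symm.injective, fun k => ?_⟩
  have := Finset.prod_ne_zero_iff.mp hprod (σ.symm k) (Finset.mem_univ _)
  simpa [M', Equiv.apply_symm_apply] using this

lemma gRank_eq_iff {n : ℕ} {α : Type} [Fintype α] (P : Fin n → α → Prop) :
    gRank P = n ↔ ∃ φ : Fin n → α, Function.Injective φ ∧ ∀ k, P k (φ k) := by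
  classical
  set S := {t : ℕ | ∃ M : Matrix (Fin n) α ℝ, (∀ k c, ¬ P k c → M k c = 0) ∧ M.rank = t} with hS
  have hbdd : BddAbove S := by
    refine ⟨n, fun t ht => ?_⟩
    obtain ⟨M, -, hr⟩ := ht
    simpa [hr, Fintype.card_fin] using M.rank_le_card_height
  have hne : S.Nonempty := ⟨0, 0, fun _ _ _ => rfl, Matrix.rank_zero⟩
  constructor
  · intro h
    have hmem : n ∈ S := by
      rw [← h]
      exact Nat.sSup_mem hne hbdd
    obtain ⟨M, hz, hr⟩ := hmem
    obtain ⟨φ, hinj, hne0⟩ := exists_transversal_of_rank M hr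
    exact ⟨φ, hinj, fun k => by
      by_contra hP
      exact hne0 k (hz k (φ k) hP)⟩
  · rintro ⟨φ, hinj, hP⟩
    set M : Matrix (Fin n) α ℝ := fun k c => if c = φ k then 1 else 0 with hM
    set N : Matrix α (Fin n) ℝ := fun c k => if c = φ k then 1 else 0 with hN
    have hMN : M * N = 1 := by
      ext k k'
      rw [Matrix.mul_apply]
      simp only [hM, hN, Matrix.one_apply, ite_mul, one_mul, zero_mul]
      rw [Finset.sum_ite_eq' Finset.univ (φ k) (fun c => if c = φ k' then (1:ℝ) else 0)]
      simp only [Finset.mem_univ, if_true]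
      by_cases h : k = k'
      · simp [h]
      · have : φ k ≠ φ k' := fun he => h (hinj he)
        simp [h, this]
    have hrank : M.rank = n := by
      refine le_antisymm (by simpa [Fintype.card_fin] using M.rank_le_card_height) ?_
      calc n = (1 : Matrix (Fin n) (Fin n) ℝ).rank := by simp [Matrix.rank_one]
        _ = (M * N).rank := by rw [hMN]
        _ ≤ M.rank := Matrix.rank_mul_le_left M N
    have hmem : n ∈ S := by
      refine ⟨M, fun k c hPc => ?_, hrank⟩
      simp only [hM]
      rw [if_neg]
      intro he; exact hPc (he ▸ hP k)
    refine le_antisymm (csSup_le hne ?_) (le_csSup hbdd hmem)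
    intro t ht
    obtain ⟨M', -, hr⟩ := ht
    simpa [hr, Fintype.card_fin] using M'.rank_le_card_height

lemma hasSDisjoint_iff_transversal {m n r : ℕ}
    (PA : Fin m → Fin n → Fin n → Prop) (PB : Fin m → Fin n → Fin r → Prop) :
    HasSDisjointEdges PA PB n ↔
      ∃ φ : Fin n → (Fin m × Fin n) ⊕ (Fin m × Fin r),
        Function.Injective φ ∧ ∀ k, concatPattern PA PB k (φ k) := by
  constructor
  · rintro ⟨v, v', c, hedge, hinj, hcol⟩
    have hbij : Function.Bijective v' := (Finite.injective_iff_bijective).mp hinj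
    let e : Fin n ≃ Fin n := Equiv.ofBijective v' hbij
    let col : Fin n → (Fin m × Fin n) ⊕ (Fin m × Fin r) := fun t =>
      Sum.elim (fun j => Sum.inr (c t, j)) (fun l => Sum.inl (c t, l)) (v t)
    have hcolP : ∀ t, concatPattern PA PB (v' t) (col t) := by
      intro t
      have h := hedge t
      rcases hv : v t with j | l <;> rw [hv] at h <;>
        simp only [col, hv, Sum.elim_inl, Sum.elim_inr, concatPattern, subEdge] at * <;>
        exact h
    have hcolinj : Function.Injective col := by
      intro s t hst
      by_contra hne
      rcases hvs : v s with j | l <;> rcases hvt : v t with j' | l' <;>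
          simp only [col, hvs, hvt, Sum.elim_inl, Sum.elim_inr, Sum.inl.injEq,
            Sum.inr.injEq, Prod.mk.injEq] at hst <;>
        first
          | (obtain ⟨hc, hj⟩ := hst; exact hcol s t hne (by rw [hvs, hvt, hj]) hc)
          | exact absurd hst (by simp)
    refine ⟨fun k => col (e.symm k), hcolinj.comp e.symm.injective, fun k => ?_⟩
    have := hcolP (e.symm k)
    have hv' : v' (e.symm k) = k := e.apply_symm_apply k
    rwa [hv'] at this
  · rintro ⟨φ, hinj, hP⟩
    refine ⟨fun k => Sum.elim (fun p => Sum.inr p.2) (fun p => Sum.inl p.2) (φ k),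
      id, fun k => Sum.elim Prod.fst Prod.fst (φ k), fun t => ?_, fun _ _ h => h,
      fun s t hne hv hc => ?_⟩
    · have := hP t
      rcases hφ : φ t with ⟨i, l⟩ | ⟨i, j⟩ <;> rw [hφ] at this <;>
        simp only [hφ, Sum.elim_inl, Sum.elim_inr, concatPattern, subEdge] at * <;>
        exact this
    · rcases hφs : φ s with ⟨i, l⟩ | ⟨i, j⟩ <;> rcases hφt : φ t with ⟨i', l'⟩ | ⟨i', j'⟩ <;>
        simp only [hφs, hφt, Sum.elim_inl, Sum.elim_inr, Sum.inl.injEq, Sum.inr.injEq,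
          reduceCtorEq] at hv hc
      · exact hne (hinj (by rw [hφs, hφt, hv, hc]))
      · exact hne (hinj (by rw [hφs, hφt, hv, hc]))

/-- There exist `n` `S`-disjoint edges in the colored union graph iff the
concatenated structured pattern `[A_1,…,A_m,B_1,…,B_m]` has generic rank `n`. -/
theorem sDisjointEdges_iff_gRank_concatPattern
    {m n r : ℕ} (PA : Fin m → Fin n → Fin n → Prop) (PB : Fin m → Fin n → Fin r → Prop) :
    HasSDisjointEdges PA PB n ↔ gRank (concatPattern PA PB) = n := by
  rw [gRank_eq_iff]
  exact hasSDisjoint_iff_transversal PA PB
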